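/- Let (φ_α)_{α>0} be a family of functions φ_α : ℝ → ℝ, each monotonically increasing, nonexpansive (1-Lipschitz) and satisfying φ_α(0) = 0. Then the following are equivalent: (1) for every x ∈ ℝ, φ_α(x) → x as α → 0; (2) for every x ∈ ℝ, sup{ |y − x| : y ∈ ℝ, φ_α(y) = x } → 0 as α → 0, where the supremum over the empty set is taken to be +∞ (so (2) in particular requires the preimage φ_α⁻¹({x}) to be nonempty for all sufficiently small α). -/

import Mathlib

open scoped ENNReal
open Filter

noncomputable section
open Classical in

/-- For a family `(φ_α)_{α>0}` of monotone, nonexpansive functions on `ℝ`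
with `φ_α 0 = 0`, pointwise convergence `φ_α(x) → x` as `α → 0` is equivalent to convergence
of the inverses to the identity, where `sup_{y ∈ φ_α⁻¹({x})} |y - x|` is interpreted in
`[0,∞]` with the convention that the supremum over the empty set is `+∞`. -/
theorem statement0 (φ : ℝ → ℝ → ℝ)
    (hmono : ∀ α : ℝ, 0 < α → Monotone (φ α))
    (hnonexp : ∀ α : ℝ, 0 < α → ∀ x y : ℝ, |φ α x - φ α y| ≤ |x - y|)
    (hzero : ∀ α : ℝ, 0 < α → φ α 0 = 0) :
    (∀ x : ℝ, Tendsto (fun α => φ α x) (nhdsWithin 0 (Set.Ioi 0)) (nhds x)) ↔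
    (∀ x : ℝ, Tendsto
      (fun α => if ∃ y, φ α y = x then
          ⨆ y : {y : ℝ // φ α y = x}, (‖(y : ℝ) - x‖₊ : ℝ≥0∞)
        else ⊤)
      (nhdsWithin 0 (Set.Ioi 0)) (nhds 0)) := by
  constructor
  · intro h x
    rw [ENNReal.tendsto_nhds_zero]
    intro ε hε
    set δ : ℝ≥0∞ := min ε 1 with hδ
    have hδ0 : 0 < δ := lt_min hε zero_lt_one
    have hδtop : δ ≠ ⊤ := ne_top_of_le_ne_top ENNReal.one_ne_top (min_le_right _ _)
    set r : ℝ := δ.toReal with hrdef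
    have hr0 : 0 < r := ENNReal.toReal_pos hδ0.ne' hδtop
    have hrδ : ENNReal.ofReal r = δ := ENNReal.ofReal_toReal hδtop
    have h1 : ∀ᶠ α in nhdsWithin (0:ℝ) (Set.Ioi 0), φ α (x - r) < x :=
      (h (x - r)).eventually_lt_const (by linarith)
    have h2 : ∀ᶠ α in nhdsWithin (0:ℝ) (Set.Ioi 0), x < φ α (x + r) :=
      (h (x + r)).eventually_const_lt (by linarith)
    filter_upwards [h1, h2, self_mem_nhdsWithin] with α hα1 hα2 hα
    have hαpos : (0:ℝ) < α := hα
    have hlip : LipschitzWith 1 (φ α) := by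
      apply LipschitzWith.of_dist_le_mul
      intro a b
      simp only [Real.dist_eq, NNReal.coe_one, one_mul]
      exact hnonexp α hαpos a b
    -- existence of a preimage by IVT
    obtain ⟨y₀, _, hy₀⟩ := intermediate_value_Icc (by linarith : x - r ≤ x + r)
      hlip.continuous.continuousOn ⟨hα1.le, hα2.le⟩
    rw [if_pos ⟨y₀, hy₀⟩]
    refine iSup_le fun ⟨y, hy⟩ => ?_
    have hyub : y ≤ x + r := by
      by_contra hc
      push_neg at hc
      have := hmono α hαpos hc.le
      rw [hy] at this
      linarith
    have hylb : x - r ≤ y := by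
      by_contra hc
      push_neg at hc
      have := hmono α hαpos hc.le
      rw [hy] at this
      linarith
    have habs : ‖y - x‖ ≤ r := by
      rw [Real.norm_eq_abs, abs_le]; constructor <;> linarith
    calc (‖y - x‖₊ : ℝ≥0∞) = ENNReal.ofReal ‖y - x‖ := (ofReal_norm _).symm
      _ ≤ ENNReal.ofReal r := ENNReal.ofReal_le_ofReal habs
      _ = δ := hrδ
      _ ≤ ε := min_le_left _ _
  · intro h x
    rw [Metric.tendsto_nhds]
    intro ε hε
    have hev := (ENNReal.tendsto_nhds_zero.mp (h x)) (ENNReal.ofReal (ε / 2))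
      (by positivity)
    filter_upwards [hev, self_mem_nhdsWithin] with α hα1 hα
    have hαpos : (0:ℝ) < α := hα
    by_cases hex : ∃ y, φ α y = x
    · rw [if_pos hex] at hα1
      obtain ⟨y, hy⟩ := hex
      have hle : (‖y - x‖₊ : ℝ≥0∞) ≤ ENNReal.ofReal (ε / 2) :=
        le_trans (le_iSup (fun y : {y : ℝ // φ α y = x} => (‖(y:ℝ) - x‖₊ : ℝ≥0∞)) ⟨y, hy⟩) hα1
      rw [← enorm_eq_nnnorm, ← ofReal_norm,
        ENNReal.ofReal_le_ofReal_iff (by positivity)] at hle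
      have hnx : |φ α x - x| ≤ |x - y| := by
        calc |φ α x - x| = |φ α x - φ α y| := by rw [hy]
          _ ≤ |x - y| := hnonexp α hαpos x y
      rw [Real.dist_eq]
      have : |x - y| = ‖y - x‖ := by rw [Real.norm_eq_abs, abs_sub_comm]
      rw [this] at hnx
      linarith
    · rw [if_neg hex] at hα1
      exact absurd (le_antisymm hα1 le_top) (ENNReal.ofReal_ne_top).symm
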